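/- Young's inequality for A-convolution: if f ∈ Lʳ(ℝ), g ∈ Lˢ(ℝ) and 1/r + 1/s = 1 + 1/t with 1 ≤ r, s, t ≤ ∞, then f ⋆_A g ∈ Lᵗ(ℝ) and ‖f ⋆_A g‖_t ≤ |b|^{−1/2} ‖f‖_r ‖g‖_s. -/

import Mathlib

open MeasureTheory Complex ENNReal

/-- The A-convolution. -/
noncomputable def convA (a b : ℝ) (f g : ℝ → ℂ) (x : ℝ) : ℂ :=
  (1 / Real.sqrt |b|) *
    ∫ s : ℝ, f s *
      (Complex.exp (-2 * Real.pi * Complex.I * (a / b) * s * (x - s)) * g (x - s))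

namespace YoungAAux

lemma mp_sub_left (x : ℝ) : MeasurePreserving (fun s => x - s) (volume : Measure ℝ) volume := by
  have h := (measurePreserving_add_left (volume : Measure ℝ) x).comp
    (Measure.measurePreserving_neg (volume : Measure ℝ))
  simpa [Function.comp_def, sub_eq_add_neg] using h

lemma lint_sub_left {H : ℝ → ℝ≥0∞} (hH : Measurable H) (x : ℝ) :
    ∫⁻ y, H (x - y) = ∫⁻ y, H y := (mp_sub_left x).lintegral_comp hH

lemma lint_sub_right {H : ℝ → ℝ≥0∞} (hH : Measurable H) (y : ℝ) :
    ∫⁻ x, H (x - y) = ∫⁻ x, H x :=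
  (measurePreserving_sub_right volume y).lintegral_comp hH

lemma holder3 {u v w : ℝ → ℝ≥0∞} (hu : AEMeasurable u volume) (hv : AEMeasurable v volume)
    (hw : AEMeasurable w volume) {a b c : ℝ} (ha : 0 ≤ a) (hb : 0 ≤ b) (hc : 0 ≤ c)
    (habc : a + b + c = 1) :
    ∫⁻ x, u x ^ a * v x ^ b * w x ^ c ≤
      (∫⁻ x, u x) ^ a * (∫⁻ x, v x) ^ b * (∫⁻ x, w x) ^ c := by
  have h := ENNReal.lintegral_prod_norm_pow_le (μ := volume) (Finset.univ : Finset (Fin 3))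
    (f := ![u, v, w]) (p := ![a, b, c]) ?_ ?_ ?_
  · simpa [Fin.prod_univ_three, mul_assoc] using h
  · intro i _; fin_cases i <;> simpa
  · simpa [Fin.sum_univ_three] using habc
  · intro i _; fin_cases i <;> simpa

lemma young_core {F G : ℝ → ℝ≥0∞} (hF : Measurable F) (hG : Measurable G)
    {r s t : ℝ} (hr : 1 ≤ r) (hs : 1 ≤ s) (ht : 1 ≤ t)
    (hrst : 1 / r + 1 / s = 1 + 1 / t) :
    (∫⁻ x, (∫⁻ y, F y * G (x - y)) ^ t) ^ (1 / t) ≤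
      (∫⁻ y, F y ^ r) ^ (1 / r) * (∫⁻ y, G y ^ s) ^ (1 / s) := by
  have hr0 : (0:ℝ) < r := lt_of_lt_of_le one_pos hr
  have hs0 : (0:ℝ) < s := lt_of_lt_of_le one_pos hs
  have ht0 : (0:ℝ) < t := lt_of_lt_of_le one_pos ht
  set A := ∫⁻ y, F y ^ r with hA
  set B := ∫⁻ y, G y ^ s with hB
  set p₁ : ℝ := 1 / r - 1 / t with hp₁def
  set p₂ : ℝ := 1 / s - 1 / t with hp₂def
  have h1s : 1 / s ≤ 1 := by rw [div_le_one hs0]; exact hs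
  have h1r : 1 / r ≤ 1 := by rw [div_le_one hr0]; exact hr
  have hp₁ : 0 ≤ p₁ := by rw [hp₁def]; linarith
  have hp₂ : 0 ≤ p₂ := by rw [hp₂def]; linarith
  have hsum : 1 / t + p₁ + p₂ = 1 := by rw [hp₁def, hp₂def]; linarith
  have hrr : r * (1 / r) = 1 := by field_simp
  have hss : s * (1 / s) = 1 := by field_simp
  have hFsplit : ∀ z : ℝ≥0∞, z = (z ^ r) ^ (1 / t) * (z ^ r) ^ p₁ := by
    intro z
    rw [← ENNReal.rpow_mul, ← ENNReal.rpow_mul,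
      ← ENNReal.rpow_add_of_nonneg _ _ (by positivity) (mul_nonneg hr0.le hp₁)]
    have he : r * (1 / t) + r * p₁ = 1 := by rw [hp₁def, mul_sub]; linarith
    rw [he, ENNReal.rpow_one]
  have hGsplit : ∀ z : ℝ≥0∞, z = (z ^ s) ^ (1 / t) * (z ^ s) ^ p₂ := by
    intro z
    rw [← ENNReal.rpow_mul, ← ENNReal.rpow_mul,
      ← ENNReal.rpow_add_of_nonneg _ _ (by positivity) (mul_nonneg hs0.le hp₂)]
    have he : s * (1 / t) + s * p₂ = 1 := by rw [hp₂def, mul_sub]; linarith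
    rw [he, ENNReal.rpow_one]
  have step2 : ∀ x, (∫⁻ y, F y * G (x - y)) ≤
      (∫⁻ y, F y ^ r * G (x - y) ^ s) ^ (1 / t) * A ^ p₁ * B ^ p₂ := by
    intro x
    have hGm : Measurable fun y => G (x - y) :=
      hG.comp (measurable_const.sub measurable_id)
    have heq : (∫⁻ y, F y * G (x - y)) =
        ∫⁻ y, (F y ^ r * G (x - y) ^ s) ^ (1 / t) * (F y ^ r) ^ p₁ * (G (x - y) ^ s) ^ p₂ := by
      apply lintegral_congr fun y => ?_
      rw [ENNReal.mul_rpow_of_nonneg _ _ (by positivity : (0:ℝ) ≤ 1 / t)]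
      calc F y * G (x - y)
          = ((F y ^ r) ^ (1 / t) * (F y ^ r) ^ p₁) *
            ((G (x - y) ^ s) ^ (1 / t) * (G (x - y) ^ s) ^ p₂) := by
            rw [← hFsplit, ← hGsplit]
        _ = _ := by ring
    rw [heq]
    have h3 := holder3 (u := fun y => F y ^ r * G (x - y) ^ s) (v := fun y => F y ^ r)
      (w := fun y => G (x - y) ^ s)
      ((hF.pow_const r).mul (hGm.pow_const s)).aemeasurable
      (hF.pow_const r).aemeasurable (hGm.pow_const s).aemeasurable
      (by positivity) hp₁ hp₂ hsum
    have hBx : (∫⁻ y, G (x - y) ^ s) = B := lint_sub_left (hG.pow_const s) x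
    rw [hBx] at h3
    exact h3
  have hker : Measurable fun p : ℝ × ℝ => F p.2 ^ r * G (p.1 - p.2) ^ s :=
    ((hF.comp measurable_snd).pow_const r).mul
      ((hG.comp (measurable_fst.sub measurable_snd)).pow_const s)
  have hΦm : Measurable fun x => ∫⁻ y, F y ^ r * G (x - y) ^ s :=
    Measurable.lintegral_prod_right (f := fun x y => F y ^ r * G (x - y) ^ s) hker
  have swap : (∫⁻ x, ∫⁻ y, F y ^ r * G (x - y) ^ s) = A * B := by
    rw [lintegral_lintegral_swap (f := fun x y => F y ^ r * G (x - y) ^ s) hker.aemeasurable]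
    have hinner : ∀ y, (∫⁻ x, F y ^ r * G (x - y) ^ s) = F y ^ r * B := fun y => by
      rw [lintegral_const_mul (f := fun x => G (x - y) ^ s) _
        ((hG.comp (measurable_id.sub measurable_const)).pow_const s)]
      congr 1
      exact lint_sub_right (hG.pow_const s) y
    simp_rw [hinner]
    rw [lintegral_mul_const _ (hF.pow_const r)]
  have step4 : (∫⁻ x, (∫⁻ y, F y * G (x - y)) ^ t) ≤
      (A * B) * (A ^ (p₁ * t) * B ^ (p₂ * t)) := by
    calc ∫⁻ x, (∫⁻ y, F y * G (x - y)) ^ t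
        ≤ ∫⁻ x, (∫⁻ y, F y ^ r * G (x - y) ^ s) * (A ^ (p₁ * t) * B ^ (p₂ * t)) := by
          apply lintegral_mono fun x => ?_
          calc (∫⁻ y, F y * G (x - y)) ^ t
              ≤ ((∫⁻ y, F y ^ r * G (x - y) ^ s) ^ (1 / t) * A ^ p₁ * B ^ p₂) ^ t :=
                ENNReal.rpow_le_rpow (step2 x) ht0.le
            _ = (∫⁻ y, F y ^ r * G (x - y) ^ s) * (A ^ (p₁ * t) * B ^ (p₂ * t)) := by
                rw [ENNReal.mul_rpow_of_nonneg _ _ ht0.le,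
                  ENNReal.mul_rpow_of_nonneg _ _ ht0.le,
                  ← ENNReal.rpow_mul, ← ENNReal.rpow_mul, ← ENNReal.rpow_mul,
                  one_div_mul_cancel ht0.ne', ENNReal.rpow_one, mul_assoc]
      _ = (A * B) * (A ^ (p₁ * t) * B ^ (p₂ * t)) := by
          rw [lintegral_mul_const _ hΦm, swap]
  calc (∫⁻ x, (∫⁻ y, F y * G (x - y)) ^ t) ^ (1 / t)
      ≤ ((A * B) * (A ^ (p₁ * t) * B ^ (p₂ * t))) ^ (1 / t) :=
        ENNReal.rpow_le_rpow step4 (by positivity)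
    _ = A ^ (1 / r) * B ^ (1 / s) := by
        have hgroup : (A * B) * (A ^ (p₁ * t) * B ^ (p₂ * t)) =
            A ^ (1 + p₁ * t) * B ^ (1 + p₂ * t) := by
          rw [ENNReal.rpow_add_of_nonneg _ _ zero_le_one (mul_nonneg hp₁ ht0.le),
            ENNReal.rpow_add_of_nonneg _ _ zero_le_one (mul_nonneg hp₂ ht0.le),
            ENNReal.rpow_one, ENNReal.rpow_one]
          ring
        rw [hgroup, ENNReal.mul_rpow_of_nonneg _ _ (by positivity : (0:ℝ) ≤ 1 / t),
          ← ENNReal.rpow_mul, ← ENNReal.rpow_mul]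
        have e1 : (1 + p₁ * t) * (1 / t) = 1 / r := by
          rw [hp₁def]; field_simp; ring
        have e2 : (1 + p₂ * t) * (1 / t) = 1 / s := by
          rw [hp₂def]; field_simp; ring
        rw [e1, e2]

/-- An Lᵖ-type "norm" for `ℝ≥0∞`-valued functions. -/
noncomputable def D (p : ℝ≥0∞) (h : ℝ → ℝ≥0∞) : ℝ≥0∞ :=
  if p = ∞ then essSup h volume else (∫⁻ x, h x ^ p.toReal) ^ (1 / p.toReal)

lemma D_top (h : ℝ → ℝ≥0∞) : D ∞ h = essSup h volume := if_pos rfl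

lemma D_eq {p : ℝ≥0∞} (hp : p ≠ ∞) (h : ℝ → ℝ≥0∞) :
    D p h = (∫⁻ x, h x ^ p.toReal) ^ (1 / p.toReal) := if_neg hp

lemma D_one (h : ℝ → ℝ≥0∞) : D 1 h = ∫⁻ x, h x := by
  rw [D_eq one_ne_top]
  simp [ENNReal.toReal_one]

lemma young_D {F G : ℝ → ℝ≥0∞} (hF : Measurable F) (hG : Measurable G)
    {r s t : ℝ≥0∞} (hr : 1 ≤ r) (hs : 1 ≤ s) (ht : 1 ≤ t)
    (hrst : 1 / r + 1 / s = 1 + 1 / t) :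
    D t (fun x => ∫⁻ y, F y * G (x - y)) ≤ D r F * D s G := by
  have hrne0 : r ≠ 0 := (zero_lt_one.trans_le hr).ne'
  have hsne0 : s ≠ 0 := (zero_lt_one.trans_le hs).ne'
  have htne0 : t ≠ 0 := (zero_lt_one.trans_le ht).ne'
  rcases eq_or_ne t ∞ with rfl | htop
  · have hrs : 1 / r + 1 / s = 1 := by simpa using hrst
    rw [D_top]
    rcases eq_or_ne r 1 with rfl | hr1
    · -- r = 1, s = ∞
      have hs_top : s = ∞ := by
        have h0 : 1 / s = 0 := by
          have : (1:ℝ≥0∞) + 1 / s = 1 + 0 := by simpa using hrs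
          exact (ENNReal.add_right_inj one_ne_top).1 this
        rw [one_div] at h0
        simpa using ENNReal.inv_eq_zero.1 h0
      subst hs_top
      rw [D_one, D_top]
      refine essSup_le_of_ae_le _ ?_
      apply Filter.Eventually.of_forall
      intro x
      beta_reduce
      have hswap : (∫⁻ y, F y * G (x - y)) = ∫⁻ y, F (x - y) * G y := by
        have h := lint_sub_left (H := fun z => F z * G (x - z))
          (hF.mul (hG.comp (measurable_const.sub measurable_id))) x
        simpa using h.symm
      rw [hswap]
      calc ∫⁻ y, F (x - y) * G y ≤ ∫⁻ y, F (x - y) * essSup G volume := by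
            apply lintegral_mono_ae
            exact (ENNReal.ae_le_essSup G).mono fun y hy => mul_le_mul_right hy _
        _ = (∫⁻ y, F (x - y)) * essSup G volume :=
            lintegral_mul_const _ (hF.comp (measurable_const.sub measurable_id))
        _ = (∫⁻ y, F y) * essSup G volume := by rw [lint_sub_left hF x]
    · rcases eq_or_ne s 1 with rfl | hs1
      · -- s = 1, r = ∞
        have hr_top : r = ∞ := by
          have h0 : 1 / r = 0 := by
            have h' : (1:ℝ≥0∞) + 1 / r = 1 + 0 := by
              rw [add_comm]
              simpa using hrs
            exact (ENNReal.add_right_inj one_ne_top).1 h'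
          rw [one_div] at h0
          simpa using ENNReal.inv_eq_zero.1 h0
        subst hr_top
        rw [D_one, D_top]
        refine essSup_le_of_ae_le _ ?_
        apply Filter.Eventually.of_forall
        intro x
        beta_reduce
        calc ∫⁻ y, F y * G (x - y) ≤ ∫⁻ y, essSup F volume * G (x - y) := by
              apply lintegral_mono_ae
              exact (ENNReal.ae_le_essSup F).mono fun y hy => mul_le_mul_left hy _
          _ = essSup F volume * ∫⁻ y, G (x - y) :=
              lintegral_const_mul _ (hG.comp (measurable_const.sub measurable_id))
          _ = essSup F volume * ∫⁻ y, G y := by rw [lint_sub_left hG x]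
      · -- 1 < r, s < ∞, conjugate
        have hrtop : r ≠ ∞ := by
          intro h
          rw [h] at hrs
          simp only [one_div, ENNReal.inv_top, zero_add] at hrs
          exact hs1 (by simpa using congrArg Inv.inv hrs)
        have hstop : s ≠ ∞ := by
          intro h
          rw [h] at hrs
          simp only [one_div, ENNReal.inv_top, add_zero] at hrs
          exact hr1 (by simpa using congrArg Inv.inv hrs)
        have hr1' : (1:ℝ≥0∞) < r := lt_of_le_of_ne hr (Ne.symm hr1)
        have hr'gt : 1 < r.toReal := by
          have := (ENNReal.toReal_lt_toReal (by simp) hrtop).2 hr1'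
          simpa using this
        have hconjsum : 1 / r.toReal + 1 / s.toReal = 1 := by
          have h := congrArg ENNReal.toReal hrs
          rw [ENNReal.toReal_add (by simp [one_div, ENNReal.inv_ne_top, hrne0])
            (by simp [one_div, ENNReal.inv_ne_top, hsne0])] at h
          simpa [one_div, ENNReal.toReal_inv] using h
        have hconj : r.toReal.HolderConjugate s.toReal :=
          Real.holderConjugate_iff.2 ⟨hr'gt, by simpa [one_div] using hconjsum⟩
        rw [D_eq hrtop, D_eq hstop]
        refine essSup_le_of_ae_le _ ?_
        apply Filter.Eventually.of_forall
        intro x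
        beta_reduce
        have hGm : Measurable fun y => G (x - y) :=
          hG.comp (measurable_const.sub measurable_id)
        have h := ENNReal.lintegral_mul_le_Lp_mul_Lq (volume : Measure ℝ) hconj
          hF.aemeasurable hGm.aemeasurable
        rw [← lint_sub_left (hG.pow_const s.toReal) x]
        simpa [Pi.mul_apply, one_div] using h
  · -- t finite
    have h1t_le : ∀ {p : ℝ≥0∞}, 1 ≤ p → 1 / p ≤ 1 := fun {p} hp => by
      rw [one_div]
      exact ENNReal.inv_le_one.2 hp
    have hrtop : r ≠ ∞ := by
      intro h
      rw [h] at hrst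
      simp only [one_div, ENNReal.inv_top, zero_add] at hrst
      have h1 : (1:ℝ≥0∞) + t⁻¹ ≤ 1 := by
        rw [← hrst]
        exact ENNReal.inv_le_one.2 hs
      have h2 : t⁻¹ ≠ 0 := ENNReal.inv_ne_zero.2 htop
      exact absurd h1 (not_le.2 (ENNReal.lt_add_right one_ne_top h2))
    have hstop : s ≠ ∞ := by
      intro h
      rw [h] at hrst
      simp only [one_div, ENNReal.inv_top, add_zero] at hrst
      have h1 : (1:ℝ≥0∞) + t⁻¹ ≤ 1 := by
        rw [← hrst]
        exact ENNReal.inv_le_one.2 hr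
      have h2 : t⁻¹ ≠ 0 := ENNReal.inv_ne_zero.2 htop
      exact absurd h1 (not_le.2 (ENNReal.lt_add_right one_ne_top h2))
    have hr' : 1 ≤ r.toReal := by
      have := ENNReal.toReal_mono hrtop hr
      simpa using this
    have hs' : 1 ≤ s.toReal := by
      have := ENNReal.toReal_mono hstop hs
      simpa using this
    have ht' : 1 ≤ t.toReal := by
      have := ENNReal.toReal_mono htop ht
      simpa using this
    have hrst' : 1 / r.toReal + 1 / s.toReal = 1 + 1 / t.toReal := by
      have h := congrArg ENNReal.toReal hrst
      rw [ENNReal.toReal_add (by simp [one_div, ENNReal.inv_ne_top, hrne0])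
          (by simp [one_div, ENNReal.inv_ne_top, hsne0]),
        ENNReal.toReal_add one_ne_top (by simp [one_div, ENNReal.inv_ne_top, htne0])] at h
      simpa [one_div, ENNReal.toReal_inv] using h
    rw [D_eq htop, D_eq hrtop, D_eq hstop]
    exact young_core hF hG hr' hs' ht' hrst'

lemma D_eLpNorm {p : ℝ≥0∞} (hp : 1 ≤ p) (f : ℝ → ℂ) :
    D p (fun y => (‖f y‖₊ : ℝ≥0∞)) = eLpNorm f p volume := by
  have hp0 : p ≠ 0 := (zero_lt_one.trans_le hp).ne'
  rcases eq_or_ne p ∞ with rfl | hptop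
  · rw [D_top, eLpNorm_exponent_top]
    rfl
  · rw [D_eq hptop, eLpNorm_eq_lintegral_rpow_enorm_toReal hp0 hptop]
    rfl

theorem young_sm (a b : ℝ) (r s t : ℝ≥0∞)
    (hr : 1 ≤ r) (hs : 1 ≤ s) (ht : 1 ≤ t)
    (hrst : 1 / r + 1 / s = 1 + 1 / t)
    (f g : ℝ → ℂ) (hfm : StronglyMeasurable f) (hgm : StronglyMeasurable g)
    (hf : MemLp f r volume) (hg : MemLp g s volume) :
    MemLp (convA a b f g) t volume ∧
      eLpNorm (convA a b f g) t volume ≤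
        ENNReal.ofReal (1 / Real.sqrt |b|) * eLpNorm f r volume * eLpNorm g s volume := by
  set c0 : ℝ := 1 / Real.sqrt |b| with hc0
  have hc0nn : (0:ℝ) ≤ c0 := by rw [hc0]; positivity
  set F : ℝ → ℝ≥0∞ := fun y => (‖f y‖₊ : ℝ≥0∞) with hFdef
  set G : ℝ → ℝ≥0∞ := fun y => (‖g y‖₊ : ℝ≥0∞) with hGdef
  have hF : Measurable F := hfm.measurable.enorm
  have hG : Measurable G := hgm.measurable.enorm
  set C : ℝ → ℝ≥0∞ := fun x => ∫⁻ y, F y * G (x - y) with hCdef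
  have hCm : Measurable C := Measurable.lintegral_prod_right
    (f := fun x y => F y * G (x - y))
    ((hF.comp measurable_snd).mul (hG.comp (measurable_fst.sub measurable_snd)))
  have hexp : ∀ x y : ℝ,
      (‖Complex.exp (-2 * Real.pi * Complex.I * (a / b) * y * (x - y))‖₊ : ℝ≥0∞) = 1 := by
    intro x y
    have hz : (-2 * (Real.pi : ℂ) * Complex.I * ((a : ℂ) / (b : ℂ)) * (y : ℂ)
        * ((x : ℂ) - (y : ℂ))) =
        (((-2 * Real.pi * (a / b) * y * (x - y) : ℝ) : ℂ)) * Complex.I := by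
      push_cast
      ring
    have hn : ‖Complex.exp (-2 * Real.pi * Complex.I * (a / b) * y * (x - y))‖ = 1 := by
      rw [hz, Complex.norm_exp_ofReal_mul_I]
    rw [← enorm_eq_nnnorm, ← ofReal_norm, hn, ENNReal.ofReal_one]
  have hcoef : ((‖((1:ℂ) / (Real.sqrt |b| : ℂ))‖₊ : ℝ≥0∞)) = ENNReal.ofReal c0 := by
    rw [← enorm_eq_nnnorm, ← ofReal_norm]
    congr 1
    rw [hc0]
    rw [norm_div, norm_one, Complex.norm_real, Real.norm_eq_abs,
      _root_.abs_of_nonneg (Real.sqrt_nonneg _)]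
  have K1 : ∀ x, (‖convA a b f g x‖₊ : ℝ≥0∞) ≤ ENNReal.ofReal c0 * C x := by
    intro x
    unfold convA
    rw [nnnorm_mul, ENNReal.coe_mul, hcoef]
    apply mul_le_mul_right
    refine le_trans (enorm_integral_le_lintegral_enorm _) (le_of_eq ?_)
    apply lintegral_congr fun y => ?_
    rw [enorm_eq_nnnorm, nnnorm_mul, nnnorm_mul, ENNReal.coe_mul, ENNReal.coe_mul, hexp x y, one_mul]
  have hchirp : Continuous fun p : ℝ × ℝ =>
      Complex.exp (-2 * Real.pi * Complex.I * (a / b) * p.2 * (p.1 - p.2)) := by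
    apply Complex.continuous_exp.comp
    fun_prop
  have hker : StronglyMeasurable fun p : ℝ × ℝ =>
      f p.2 * (Complex.exp (-2 * Real.pi * Complex.I * (a / b) * p.2 * (p.1 - p.2)) *
        g (p.1 - p.2)) :=
    (hfm.comp_measurable measurable_snd).mul
      (hchirp.stronglyMeasurable.mul
        (hgm.comp_measurable (measurable_fst.sub measurable_snd)))
  have hconv_sm : StronglyMeasurable (convA a b f g) := by
    have hint : StronglyMeasurable fun x : ℝ => ∫ y : ℝ,
        f y * (Complex.exp (-2 * Real.pi * Complex.I * (a / b) * y * (x - y)) * g (x - y)) :=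
      hker.integral_prod_right'
    exact stronglyMeasurable_const.mul hint
  have hDt : eLpNorm (convA a b f g) t volume ≤ ENNReal.ofReal c0 * D t C := by
    rcases eq_or_ne t ∞ with rfl | htop
    · rw [eLpNorm_exponent_top, D_top]
      refine le_trans (essSup_mono_ae (Filter.Eventually.of_forall K1)) ?_
      rw [essSup_const_mul]
    · have ht0 : t ≠ 0 := (zero_lt_one.trans_le ht).ne'
      have ht0' : 0 < t.toReal := ENNReal.toReal_pos ht0 htop
      rw [eLpNorm_eq_lintegral_rpow_enorm_toReal ht0 htop, D_eq htop]
      calc (∫⁻ x, (‖convA a b f g x‖₊ : ℝ≥0∞) ^ t.toReal) ^ (1 / t.toReal)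
          ≤ (∫⁻ x, (ENNReal.ofReal c0 * C x) ^ t.toReal) ^ (1 / t.toReal) := by
            apply ENNReal.rpow_le_rpow _ (by positivity)
            exact lintegral_mono fun x => ENNReal.rpow_le_rpow (K1 x) ht0'.le
        _ = ENNReal.ofReal c0 * (∫⁻ x, C x ^ t.toReal) ^ (1 / t.toReal) := by
            simp_rw [ENNReal.mul_rpow_of_nonneg _ _ ht0'.le]
            rw [lintegral_const_mul _ (hCm.pow_const _),
              ENNReal.mul_rpow_of_nonneg _ _ (by positivity : (0:ℝ) ≤ 1 / t.toReal),
              ← ENNReal.rpow_mul, mul_one_div_cancel ht0'.ne', ENNReal.rpow_one]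
  have hyoung : D t C ≤ eLpNorm f r volume * eLpNorm g s volume := by
    have h := young_D hF hG hr hs ht hrst
    rwa [D_eLpNorm hr, D_eLpNorm hs] at h
  have hbound : eLpNorm (convA a b f g) t volume ≤
      ENNReal.ofReal c0 * eLpNorm f r volume * eLpNorm g s volume := by
    refine hDt.trans ?_
    rw [mul_assoc]
    exact mul_le_mul_right hyoung _
  refine ⟨⟨hconv_sm.aestronglyMeasurable, ?_⟩, hbound⟩
  refine lt_of_le_of_lt hbound ?_
  apply ENNReal.mul_lt_top
  · apply ENNReal.mul_lt_top
    · exact ENNReal.ofReal_lt_top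
    · exact hf.2
  · exact hg.2

end YoungAAux

/-- Young's inequality for the A-convolution. -/
theorem young_A_convolution (a b : ℝ) (hb : b ≠ 0) (r s t : ℝ≥0∞)
    (hr : 1 ≤ r) (hs : 1 ≤ s) (ht : 1 ≤ t)
    (hrst : 1 / r + 1 / s = 1 + 1 / t)
    (f g : ℝ → ℂ) (hf : MemLp f r volume) (hg : MemLp g s volume) :
    MemLp (convA a b f g) t volume ∧
      eLpNorm (convA a b f g) t volume ≤
        ENNReal.ofReal (1 / Real.sqrt |b|) * eLpNorm f r volume * eLpNorm g s volume := by
  set f' := hf.aestronglyMeasurable.mk f with hf'def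
  set g' := hg.aestronglyMeasurable.mk g with hg'def
  have hf'm : StronglyMeasurable f' := hf.aestronglyMeasurable.stronglyMeasurable_mk
  have hg'm : StronglyMeasurable g' := hg.aestronglyMeasurable.stronglyMeasurable_mk
  have hff' : f =ᵐ[volume] f' := hf.aestronglyMeasurable.ae_eq_mk
  have hgg' : g =ᵐ[volume] g' := hg.aestronglyMeasurable.ae_eq_mk
  have hconv : convA a b f g = convA a b f' g' := by
    funext x
    unfold convA
    congr 1
    apply integral_congr_ae
    have h2 : ∀ᵐ y ∂(volume : Measure ℝ), g (x - y) = g' (x - y) := by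
      have h := (YoungAAux.mp_sub_left x).quasiMeasurePreserving.ae_eq_comp hgg'
      simpa [Function.comp_def, Filter.EventuallyEq] using h
    filter_upwards [hff', h2] with y h1 h2'
    rw [h1, h2']
  rw [hconv, eLpNorm_congr_ae hff', eLpNorm_congr_ae hgg']
  exact YoungAAux.young_sm a b r s t hr hs ht hrst f' g' hf'm hg'm
    (hf.ae_eq hff') (hg.ae_eq hgg')
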